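/- Suppose G_1, …, G_m are finite subgraphs of the infinite path Path_ℤ with G_1 ∪ ⋯ ∪ G_m = Path_k (k ≥ 1), and let g := gap(G_1,…,G_m). Then g > 0 and: (i) Δ⃗(G_1,…,G_m) ≥ k/(2g); (ii) for every j ∈ {1,…,m}, Δ⃗(G_j, G_1, …, G_{j−1}, G_{j+1}, …, G_m) ≥ (k − λ(G_j)·Δ(G_j))/(4g). -/

import Mathlib

noncomputable section

/-- A finite subgraph of the infinite path `Path_ℤ`, identified with its (finite) edge set:
the integer `i` encodes the edge `{i-1, i}` of `Path_ℤ`. -/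
abbrev PGraph := Finset ℤ

/-- The connected component of the edge `i` in `G`: all edges `j ∈ G` such that every edge
lying between `i` and `j` also belongs to `G`. -/
def comp (G : PGraph) (i : ℤ) : PGraph :=
  G.filter fun j => ∀ l ∈ Finset.Icc (min i j) (max i j), l ∈ G

/-- `Δ(G)`: the number of connected components of `G`. -/
def Delta (G : PGraph) : ℕ := (G.filter fun i => i - 1 ∉ G).card

/-- `λ(G)`: the maximum number of edges of a connected component of `G`. -/
def lam (G : PGraph) : ℕ := G.sup fun i => (comp G i).card

/-- `G ⊖ F`: the union of the connected components of `G` that are vertex-disjoint from `F`.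
(The edges `{i-1,i}` and `{f-1,f}` share a vertex iff `|i - f| ≤ 1`.) -/
def ominus (G F : PGraph) : PGraph :=
  G.filter fun i => ∀ j ∈ comp G i, ∀ f ∈ F, 1 < (j - f).natAbs

/-- `Path_k`: the subgraph of `Path_ℤ` with edges `{i-1,i}` for `1 ≤ i ≤ k`. -/
def pathk (k : ℕ) : PGraph := Finset.Icc 1 (k : ℤ)

/-- `Δ⃗(G_1,…,G_m ∣ F)`. -/
def dvecFrom : PGraph → List PGraph → ℕ
  | _, [] => 0
  | F, G :: L => Delta (ominus G F) + dvecFrom (F ∪ G) L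

/-- `Δ⃗(G_1,…,G_m)`. -/
def dvec (L : List PGraph) : ℕ := dvecFrom ∅ L

def lvecFrom : PGraph → List PGraph → ℕ
  | _, [] => 0
  | F, G :: L => lam (ominus G F) + lvecFrom (F ∪ G) L

/-- `λ⃗(G_1,…,G_m)`. -/
def lvec (L : List PGraph) : ℕ := lvecFrom ∅ L

def ldvecFrom : PGraph → List PGraph → ℕ
  | _, [] => 0
  | F, G :: L => lam (ominus G F) * Delta (ominus G F) + ldvecFrom (F ∪ G) L

/-- `λΔ⃗(G_1,…,G_m)`. -/
def ldvec (L : List PGraph) : ℕ := ldvecFrom ∅ L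

/-- The sequence `G_1, …, G_m` as a list. -/
def seqList {m : ℕ} (G : Fin m → PGraph) : List PGraph := (List.finRange m).map G

/-- `G_1 ∪ ⋯ ∪ G_{j-1}` (the union of the entries strictly before `j`). -/
def unionBelow {m : ℕ} (G : Fin m → PGraph) (j : Fin m) : PGraph :=
  (Finset.univ.filter fun i => i < j).biUnion G

/-- A shift permutation: `σ(j) ≥ j - 1` for all `j`. -/
def IsShiftPerm {m : ℕ} (σ : Equiv.Perm (Fin m)) : Prop :=
  ∀ j : Fin m, (j : ℕ) ≤ (σ j : ℕ) + 1

/-- The midpoint `(s+t)/2` (as a real number) of the connected component `Path_{s,t}` of `H`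
containing the edge `i`. -/
def midpt (H : PGraph) (i : ℤ) : ℝ :=
  (((WithTop.untopD i (comp H i).min : ℤ) : ℝ) - 1 +
    ((WithBot.unbotD i (comp H i).max : ℤ) : ℝ)) / 2

/-- The union `⋃_{j=1}^m (G_j ⊖ (G_1 ∪ ⋯ ∪ G_{j-1}))`. -/
def residUnion {m : ℕ} (G : Fin m → PGraph) : PGraph :=
  Finset.univ.biUnion fun j => ominus (G j) (unionBelow G j)

/-- The largest distance from a point of the real interval `[0,k]` to the nearest midpoint of a
connected component of `H`. -/
def gapOf (k : ℕ) (H : PGraph) : ℝ :=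
  ⨆ y : Set.Icc (0 : ℝ) (k : ℝ), sInf ((fun i => |midpt H i - (y : ℝ)|) '' (H : Set ℤ))

/-- `gap(G_1,…,G_m)` for a covering `G_1 ∪ ⋯ ∪ G_m = Path_k`. -/
def gapSeq (k : ℕ) {m : ℕ} (G : Fin m → PGraph) : ℝ := gapOf k (residUnion G)

section Basics
variable {G F H : PGraph} {i j l r : ℤ}

lemma comp_subset : comp G i ⊆ G := Finset.filter_subset _ _

lemma mem_comp_iff : j ∈ comp G i ↔ j ∈ G ∧ ∀ l ∈ Finset.Icc (min i j) (max i j), l ∈ G := by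
  simp [comp]

lemma mem_comp_self (h : i ∈ G) : i ∈ comp G i := by
  rw [mem_comp_iff]
  refine ⟨h, fun l hl => ?_⟩
  simp only [Finset.mem_Icc, min_self, max_self] at hl
  have : l = i := le_antisymm hl.2 hl.1
  rwa [this]

/-- interval-covering fact used for transitivity -/
lemma icc_sub (a b c : ℤ) : Finset.Icc (min a c) (max a c) ⊆
    Finset.Icc (min a b) (max a b) ∪ Finset.Icc (min b c) (max b c) := by
  intro x hx
  simp only [Finset.mem_Icc, Finset.mem_union] at *
  omega

lemma comp_eq_of_mem (h : j ∈ comp G i) (hi : i ∈ G) : comp G j = comp G i := by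
  rw [mem_comp_iff] at h
  obtain ⟨hjG, hij⟩ := h
  have key : ∀ a b : ℤ, a ∈ G → (∀ l ∈ Finset.Icc (min a b) (max a b), l ∈ G) →
      ∀ c, c ∈ comp G b → c ∈ comp G a := by
    intro a b haG hab c hc
    rw [mem_comp_iff] at hc ⊢
    refine ⟨hc.1, fun l hl => ?_⟩
    have := icc_sub a b c hl
    rcases Finset.mem_union.1 this with h' | h'
    · exact hab l h'
    · exact hc.2 l h'
  apply Finset.Subset.antisymm
  · intro c hc
    exact key i j hi hij c hc
  · intro c hc
    have hji : ∀ l ∈ Finset.Icc (min j i) (max j i), l ∈ G := by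
      intro l hl
      apply hij
      rwa [min_comm, max_comm] at hl
    exact key j i hjG hji c hc

lemma comp_nonempty (h : i ∈ G) : (comp G i).Nonempty := ⟨i, mem_comp_self h⟩

end Basics
section Interval
variable {G H : PGraph} {i j r : ℤ}

/-- left end (edge index) of the component of `i` -/
def lend (G : PGraph) (i : ℤ) (h : i ∈ G) : ℤ := (comp G i).min' (comp_nonempty h)
/-- right end (edge index) of the component of `i` -/
def rend (G : PGraph) (i : ℤ) (h : i ∈ G) : ℤ := (comp G i).max' (comp_nonempty h)

lemma lend_le (h : i ∈ G) : lend G i h ≤ i := Finset.min'_le _ _ (mem_comp_self h)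
lemma le_rend (h : i ∈ G) : i ≤ rend G i h := Finset.le_max' _ _ (mem_comp_self h)

lemma comp_eq_Icc (h : i ∈ G) : comp G i = Finset.Icc (lend G i h) (rend G i h) := by
  apply Finset.Subset.antisymm
  · intro x hx
    simp only [Finset.mem_Icc]
    exact ⟨Finset.min'_le _ _ hx, Finset.le_max' _ _ hx⟩
  · have hmin : lend G i h ∈ comp G i := Finset.min'_mem _ _
    have hmax : rend G i h ∈ comp G i := Finset.max'_mem _ _
    rw [mem_comp_iff] at hmin hmax
    intro x hx
    simp only [Finset.mem_Icc] at hx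
    -- x between lend and rend; i between them as well
    have hi1 : lend G i h ≤ i := lend_le h
    have hi2 : i ≤ rend G i h := le_rend h
    rw [mem_comp_iff]
    have hxG : x ∈ G := by
      rcases le_or_gt x i with hxi | hxi
      · apply hmin.2
        simp only [Finset.mem_Icc]
        omega
      · apply hmax.2
        simp only [Finset.mem_Icc]
        omega
    refine ⟨hxG, fun l hl => ?_⟩
    simp only [Finset.mem_Icc] at hl
    rcases le_or_gt l i with hli | hli
    · apply hmin.2
      simp only [Finset.mem_Icc]
      omega
    · apply hmax.2
      simp only [Finset.mem_Icc]
      omega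

lemma mem_comp_of_Icc (h : i ∈ G) (hx : lend G i h ≤ j) (hx' : j ≤ rend G i h) :
    j ∈ comp G i := by
  rw [comp_eq_Icc h]
  simp only [Finset.mem_Icc]
  exact ⟨hx, hx'⟩

/-- the set of component representatives -/
def repset (G : PGraph) : PGraph := G.filter fun i => i - 1 ∉ G

lemma Delta_eq : Delta G = (repset G).card := rfl

lemma lend_mem (h : i ∈ G) : lend G i h ∈ comp G i := Finset.min'_mem _ _
lemma rend_mem (h : i ∈ G) : rend G i h ∈ comp G i := Finset.max'_mem _ _

lemma comp_lend (h : i ∈ G) :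
    comp G (lend G i h) = comp G i := comp_eq_of_mem (lend_mem h) h

lemma lend_mem_repset (h : i ∈ G) : lend G i h ∈ repset G := by
  have h1 : lend G i h ∈ G := comp_subset (lend_mem h)
  simp only [repset, Finset.mem_filter]
  refine ⟨h1, fun hc => ?_⟩
  -- then lend - 1 ∈ comp G i, contradicting minimality
  have : lend G i h - 1 ∈ comp G (lend G i h) := by
    rw [mem_comp_iff]
    refine ⟨hc, fun l hl => ?_⟩
    simp only [Finset.mem_Icc] at hl
    have : l = lend G i h - 1 ∨ l = lend G i h := by omega
    rcases this with h' | h' <;> rw [h']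
    · exact hc
    · exact h1
  rw [comp_lend h] at this
  have h9 : lend G i h ≤ lend G i h - 1 := Finset.min'_le _ _ this
  omega

lemma repset_lend (hr : r ∈ repset G) : lend G r (Finset.mem_of_mem_filter _ hr) = r := by
  simp only [repset, Finset.mem_filter] at hr
  have h1 := lend_le (G := G) (i := r) hr.1
  rcases lt_or_eq_of_le h1 with h2 | h2
  · exfalso
    -- r - 1 would be in comp
    have : r - 1 ∈ comp G r := mem_comp_of_Icc hr.1 (by omega) (by have := le_rend (G:=G) (i:=r) hr.1; omega)
    exact hr.2 (comp_subset this)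
  · exact h2

end Interval
section Midpt
variable {G H : PGraph} {i j r : ℤ}

lemma midpt_eq (h : i ∈ G) :
    midpt G i = (((lend G i h : ℤ) : ℝ) - 1 + ((rend G i h : ℤ) : ℝ)) / 2 := by
  unfold midpt
  rw [← Finset.coe_min' (comp_nonempty h), ← Finset.coe_max' (comp_nonempty h)]
  rw [WithTop.untopD_coe, WithBot.unbotD_coe]
  rfl

lemma lend_congr (hi : i ∈ G) (hj : j ∈ G) (hij : comp G i = comp G j) :
    lend G i hi = lend G j hj := by
  unfold lend; congr 1

lemma rend_congr (hi : i ∈ G) (hj : j ∈ G) (hij : comp G i = comp G j) :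
    rend G i hi = rend G j hj := by
  unfold rend; congr 1

lemma midpt_congr (hi : i ∈ G) (hj : j ∈ G) (hij : comp G i = comp G j) :
    midpt G i = midpt G j := by
  rw [midpt_eq hi, midpt_eq hj, lend_congr hi hj hij, rend_congr hi hj hij]

lemma midpt_lend (h : i ∈ G) :
    midpt G (lend G i h) = midpt G i :=
  midpt_congr (comp_subset (lend_mem h)) h (comp_lend h)

/-- separation of distinct representatives -/
lemma repset_sep {r r' : ℤ} (hr : r ∈ repset G) (hr' : r' ∈ repset G) (hlt : r < r') :
    rend G r (Finset.mem_of_mem_filter _ hr) + 2 ≤ r' := by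
  have hrG : r ∈ G := Finset.mem_of_mem_filter _ hr
  have hr'G : r' ∈ G := Finset.mem_of_mem_filter _ hr'
  simp only [repset, Finset.mem_filter] at hr'
  by_contra hcon
  push_neg at hcon
  -- r' ≤ rend + 1 ; cases r' ≤ rend or r' = rend + 1
  rcases le_or_gt r' (rend G r hrG) with hc | hc
  · -- r' - 1 ∈ comp G r ⊆ G, contradiction with r' rep
    have : r' - 1 ∈ comp G r := mem_comp_of_Icc hrG (by have := repset_lend hr; omega) (by omega)
    exact hr'.2 (comp_subset this)
  · have hre : r' = rend G r hrG + 1 := by omega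
    have : r' - 1 ∈ comp G r := by
      rw [hre]; simpa using rend_mem hrG
    exact hr'.2 (comp_subset this)

end Midpt
section Ominus
variable {X F F₁ F₂ : PGraph} {i j r : ℤ}

lemma mem_ominus : i ∈ ominus X F ↔
    i ∈ X ∧ ∀ j ∈ comp X i, ∀ f ∈ F, 1 < (j - f).natAbs := by
  simp [ominus]

lemma ominus_subset : ominus X F ⊆ X := Finset.filter_subset _ _

lemma ominus_empty : ominus X ∅ = X := by
  apply Finset.filter_true_of_mem
  intro x hx
  simp

lemma ominus_anti (h : F₁ ⊆ F₂) : ominus X F₂ ⊆ ominus X F₁ := by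
  intro x hx
  rw [mem_ominus] at hx ⊢
  exact ⟨hx.1, fun j hj f hf => hx.2 j hj f (h hf)⟩

lemma comp_mem_ominus (hi : i ∈ ominus X F) (hj : j ∈ comp X i) : j ∈ ominus X F := by
  rw [mem_ominus] at hi ⊢
  have hiX := hi.1
  refine ⟨comp_subset hj, fun l hl f hf => ?_⟩
  rw [comp_eq_of_mem hj hiX] at hl
  exact hi.2 l hl f hf

lemma Delta_anti (h : F₁ ⊆ F₂) : Delta (ominus X F₂) ≤ Delta (ominus X F₁) := by
  rw [Delta_eq, Delta_eq]
  apply Finset.card_le_card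
  intro r hr
  simp only [repset, Finset.mem_filter] at hr ⊢
  refine ⟨ominus_anti h hr.1, fun hc => ?_⟩
  apply hr.2
  -- r - 1 ∈ ominus X F₁ ⊆ X, and r-1 ∈ comp X r, so r - 1 ∈ ominus X F₂
  have hrX : r ∈ X := ominus_subset hr.1
  have hr1X : r - 1 ∈ X := ominus_subset hc
  have : r - 1 ∈ comp X r := by
    rw [mem_comp_iff]
    refine ⟨hr1X, fun l hl => ?_⟩
    simp only [Finset.mem_Icc] at hl
    have : l = r - 1 ∨ l = r := by omega
    rcases this with h' | h' <;> rw [h']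
    · exact hr1X
    · exact hrX
  exact comp_mem_ominus hr.1 this

end Ominus

section Sums
variable {m : ℕ} (G : Fin m → PGraph)

lemma unionBelow_mono {a b : Fin m} (hab : a < b) :
    unionBelow G a ⊆ unionBelow G b := by
  intro x hx
  simp only [unionBelow, Finset.mem_biUnion, Finset.mem_filter] at hx ⊢
  obtain ⟨c, hc, hxc⟩ := hx
  exact ⟨c, ⟨hc.1, lt_trans hc.2 hab⟩, hxc⟩

lemma subset_unionBelow {a b : Fin m} (hab : a < b) : G a ⊆ unionBelow G b := by
  intro x hx
  simp only [unionBelow, Finset.mem_biUnion, Finset.mem_filter]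
  exact ⟨a, ⟨Finset.mem_univ _, hab⟩, hx⟩

/-- key summation lemma -/
lemma sum_delta_le (E : PGraph) :
    ∀ (l : List (Fin m)) (F : PGraph), (∀ a ∈ l, F ⊆ E ∪ unionBelow G a) →
      l.Pairwise (· < ·) →
      (l.map fun a => Delta (ominus (G a) (E ∪ unionBelow G a))).sum ≤
        dvecFrom F (l.map G)
  | [], F, _, _ => le_refl 0
  | a :: l', F, hF, hp => by
    simp only [List.map_cons, List.sum_cons, dvecFrom]
    have h1 : Delta (ominus (G a) (E ∪ unionBelow G a)) ≤ Delta (ominus (G a) F) :=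
      Delta_anti (hF a (List.mem_cons_self))
    have h2 : (l'.map fun b => Delta (ominus (G b) (E ∪ unionBelow G b))).sum ≤
        dvecFrom (F ∪ G a) (l'.map G) := by
      apply sum_delta_le E l' (F ∪ G a) ?_ (List.Pairwise.of_cons hp)
      intro b hb
      have hab : a < b := (List.pairwise_cons.1 hp).1 b hb
      apply Finset.union_subset
      · exact (hF a (List.mem_cons_self)).trans
          (Finset.union_subset_union_right (unionBelow_mono G hab))
      · exact (subset_unionBelow G hab).trans Finset.subset_union_right
    omega

end Sums
section Counting
variable {m : ℕ} {G : Fin m → PGraph} {r : ℤ}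

lemma comp_le_comp {X H : PGraph} (hr : r ∈ X) (hXH : ∀ x ∈ comp X r, x ∈ H) :
    comp X r ⊆ comp H r := by
  intro l hl
  rw [mem_comp_iff]
  refine ⟨hXH l hl, fun x hx => ?_⟩
  apply hXH
  simp only [Finset.mem_Icc] at hx
  have h1 : lend X r hr ≤ r := lend_le hr
  have h2 : r ≤ rend X r hr := le_rend hr
  have h3 : lend X r hr ≤ l := Finset.min'_le _ _ hl
  have h4 : l ≤ rend X r hr := Finset.le_max' _ _ hl
  have h5 : lend X r hr ≤ min r l := le_min h1 h3
  have h6 : max r l ≤ rend X r hr := max_le h2 h4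
  exact mem_comp_of_Icc hr (by omega) (by omega)

lemma mem_residUnion_iff {x : ℤ} :
    x ∈ residUnion G ↔ ∃ a, x ∈ ominus (G a) (unionBelow G a) := by
  simp [residUnion]

/-- part (i) counting -/
lemma Delta_residUnion_le : Delta (residUnion G) ≤ dvec (seqList G) := by
  have hsub : repset (residUnion G) ⊆
      Finset.univ.biUnion fun a => repset (ominus (G a) (unionBelow G a)) := by
    intro r hr
    simp only [repset, Finset.mem_filter] at hr
    obtain ⟨a, ha⟩ := mem_residUnion_iff.1 hr.1
    simp only [Finset.mem_biUnion]
    refine ⟨a, Finset.mem_univ _, ?_⟩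
    simp only [repset, Finset.mem_filter]
    exact ⟨ha, fun hc => hr.2 (mem_residUnion_iff.2 ⟨a, hc⟩)⟩
  have h1 : Delta (residUnion G) ≤
      ∑ a : Fin m, Delta (ominus (G a) (unionBelow G a)) := by
    rw [Delta_eq]
    calc (repset (residUnion G)).card ≤ _ := Finset.card_le_card hsub
    _ ≤ _ := Finset.card_biUnion_le
  have h2 : ∑ a : Fin m, Delta (ominus (G a) (unionBelow G a)) ≤ dvec (seqList G) := by
    have := sum_delta_le G ∅ (List.finRange m) ∅
      (fun a _ => Finset.empty_subset _) (List.pairwise_lt_finRange m)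
    simp only [Finset.empty_union] at this
    rw [← List.toFinset_finRange m, List.sum_toFinset _ (List.nodup_finRange m)]
    exact this
  exact h1.trans h2

variable (G) in
/-- residuals for the reordered sequence starting with `G j` -/
def resid' (j a : Fin m) : PGraph := ominus (G a) (G j ∪ unionBelow G a)

variable (G) in
/-- surviving representatives: reps of `residUnion G` whose component is
vertex-disjoint from `G j` -/
def survSet (j : Fin m) : Finset ℤ :=
  (repset (residUnion G)).filter fun r =>
    ∀ l ∈ comp (residUnion G) r, ∀ f ∈ G j, 1 < (l - f).natAbs

lemma survSet_card_le (j : Fin m) :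
    (survSet G j).card + Delta (G j) ≤
      dvec (G j :: ((List.finRange m).filter fun a => a ≠ j).map G) := by
  classical
  -- dvec of reordered list
  have hdvec : dvec (G j :: ((List.finRange m).filter fun a => a ≠ j).map G) =
      Delta (G j) + dvecFrom (G j) (((List.finRange m).filter fun a => a ≠ j).map G) := by
    simp only [dvec, dvecFrom, ominus_empty, Finset.empty_union]
  rw [hdvec]
  have hsub : survSet G j ⊆
      (Finset.univ.filter fun a => a ≠ j).biUnion fun a => repset (resid' G j a) := by
    intro r hr
    simp only [survSet, Finset.mem_filter] at hr
    obtain ⟨hrrep, hsurv⟩ := hr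
    simp only [repset, Finset.mem_filter] at hrrep
    obtain ⟨a, ha⟩ := mem_residUnion_iff.1 hrrep.1
    have haG : r ∈ G a := ominus_subset ha
    have haj : a ≠ j := by
      intro hc
      subst hc
      have := hsurv r (mem_comp_self hrrep.1) r haG
      simp at this
    simp only [Finset.mem_biUnion, Finset.mem_filter]
    refine ⟨a, ⟨Finset.mem_univ _, haj⟩, ?_⟩
    have hmem : r ∈ resid' G j a := by
      rw [resid', mem_ominus]
      have ha' := mem_ominus.1 ha
      refine ⟨ha'.1, fun l hl f hf => ?_⟩
      rcases Finset.mem_union.1 hf with hf' | hf'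
      · -- f ∈ G j : use survival, after transporting l into comp H r
        have hlH : l ∈ comp (residUnion G) r := by
          apply comp_le_comp haG
            (fun x hx => mem_residUnion_iff.2 ⟨a, comp_mem_ominus ha hx⟩) hl
        exact hsurv l hlH f hf'
      · exact ha'.2 l hl f hf'
    simp only [repset, Finset.mem_filter]
    refine ⟨hmem, fun hc => ?_⟩
    apply hrrep.2
    apply mem_residUnion_iff.2 ⟨a, ?_⟩
    have : resid' G j a ⊆ ominus (G a) (unionBelow G a) :=
      ominus_anti Finset.subset_union_right
    exact this hc
  have h1 : (survSet G j).card ≤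
      ∑ a ∈ Finset.univ.filter (fun a => a ≠ j), Delta (resid' G j a) := by
    calc (survSet G j).card ≤ _ := Finset.card_le_card hsub
    _ ≤ _ := Finset.card_biUnion_le
  have h2 : ∑ a ∈ Finset.univ.filter (fun a => a ≠ j), Delta (resid' G j a) ≤
      dvecFrom (G j) (((List.finRange m).filter fun a => a ≠ j).map G) := by
    have hl := sum_delta_le G (G j) ((List.finRange m).filter fun a => a ≠ j) (G j)
      (fun a _ => Finset.subset_union_left)
      ((List.pairwise_lt_finRange m).filter _)
    have heq : ∑ a ∈ Finset.univ.filter (fun a => a ≠ j), Delta (resid' G j a) =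
        (((List.finRange m).filter fun a => a ≠ j).map fun a =>
          Delta (ominus (G a) (G j ∪ unionBelow G a))).sum := by
      rw [← List.sum_toFinset _ ((List.nodup_finRange m).filter _)]
      rw [List.toFinset_filter, List.toFinset_finRange]
      apply Finset.sum_congr
      · ext a; simp
      · intros; rfl
    rw [heq]
    exact hl
  omega

end Counting
section GapBasics
variable {k : ℕ} {H : PGraph} {i : ℤ}

lemma lend_ge (hH : H ⊆ pathk k) (hi : i ∈ H) : 1 ≤ lend H i hi := by
  have := hH (comp_subset (lend_mem hi))
  simp only [pathk, Finset.mem_Icc] at this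
  exact this.1

lemma rend_le (hH : H ⊆ pathk k) (hi : i ∈ H) : rend H i hi ≤ (k : ℤ) := by
  have := hH (comp_subset (rend_mem hi))
  simp only [pathk, Finset.mem_Icc] at this
  exact this.2

lemma mid_ge_half (hH : H ⊆ pathk k) (hi : i ∈ H) : (1:ℝ)/2 ≤ midpt H i := by
  rw [midpt_eq hi]
  have h1 : (1:ℤ) ≤ lend H i hi := lend_ge hH hi
  have h2 : lend H i hi ≤ rend H i hi := le_trans (lend_le hi) (le_rend hi)
  have h1' : (1:ℝ) ≤ ((lend H i hi : ℤ) : ℝ) := by exact_mod_cast h1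
  have h2' : ((lend H i hi : ℤ) : ℝ) ≤ ((rend H i hi : ℤ) : ℝ) := by exact_mod_cast h2
  linarith

lemma mid_le (hH : H ⊆ pathk k) (hi : i ∈ H) : midpt H i ≤ (k:ℝ) - 1/2 := by
  rw [midpt_eq hi]
  have h2 : lend H i hi ≤ rend H i hi := le_trans (lend_le hi) (le_rend hi)
  have h3 : rend H i hi ≤ (k:ℤ) := rend_le hH hi
  have h2' : ((lend H i hi : ℤ) : ℝ) ≤ ((rend H i hi : ℤ) : ℝ) := by exact_mod_cast h2
  have h3' : ((rend H i hi : ℤ) : ℝ) ≤ (k:ℝ) := by exact_mod_cast h3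
  linarith

lemma gap_bddAbove (hne : H.Nonempty) (hk0 : (0:ℝ) ≤ (k:ℝ)) :
    BddAbove (Set.range fun y : Set.Icc (0:ℝ) (k:ℝ) =>
      sInf ((fun i => |midpt H i - (y : ℝ)|) '' (H : Set ℤ))) := by
  obtain ⟨i₀, hi₀⟩ := hne
  refine ⟨|midpt H i₀| + k, ?_⟩
  rintro x ⟨y, rfl⟩
  have hmem : |midpt H i₀ - (y:ℝ)| ∈ (fun i => |midpt H i - (y : ℝ)|) '' (H : Set ℤ) :=
    ⟨i₀, by simpa using hi₀, rfl⟩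
  have hbdd : BddBelow ((fun i => |midpt H i - (y : ℝ)|) '' (H : Set ℤ)) :=
    ⟨0, by rintro z ⟨w, _, rfl⟩; positivity⟩
  calc sInf _ ≤ |midpt H i₀ - (y:ℝ)| := csInf_le hbdd hmem
  _ ≤ |midpt H i₀| + |(y:ℝ)| := abs_sub _ _
  _ ≤ |midpt H i₀| + k := by
      have := y.2
      simp only [Set.mem_Icc] at this
      rw [abs_of_nonneg this.1]
      linarith [this.2]

/-- F1: every point of `[0,k]` is within `gapOf k H` of the midpoint of some component. -/
lemma exists_rep_near (hne : H.Nonempty) (hk0 : (0:ℝ) ≤ (k:ℝ)) {w : ℝ}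
    (hw : w ∈ Set.Icc (0:ℝ) (k:ℝ)) :
    ∃ r ∈ repset H, |midpt H r - w| ≤ gapOf k H := by
  have hfin : ((fun i => |midpt H i - w|) '' (H : Set ℤ)).Finite :=
    (H.finite_toSet).image _
  have hnem : ((fun i => |midpt H i - w|) '' (H : Set ℤ)).Nonempty := by
    obtain ⟨i₀, hi₀⟩ := hne
    exact ⟨_, ⟨i₀, by simpa using hi₀, rfl⟩⟩
  have hmem := hnem.csInf_mem hfin
  obtain ⟨i, hiH, heq⟩ := hmem
  have hiH' : i ∈ H := by simpa using hiH
  have hle : sInf ((fun i => |midpt H i - w|) '' (H : Set ℤ)) ≤ gapOf k H := by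
    have := le_ciSup (gap_bddAbove hne hk0) (⟨w, hw⟩ : Set.Icc (0:ℝ) (k:ℝ))
    exact this
  refine ⟨lend H i hiH', lend_mem_repset hiH', ?_⟩
  rw [midpt_lend hiH']
  exact le_of_eq_of_le heq hle

lemma gap_half (hH : H ⊆ pathk k) (hne : H.Nonempty) (hk : 1 ≤ k) :
    (1:ℝ)/2 ≤ gapOf k H := by
  have hk0 : (0:ℝ) ≤ (k:ℝ) := by positivity
  obtain ⟨r, hr, hle⟩ := exists_rep_near hne hk0 (Set.mem_Icc.2 ⟨le_refl _, hk0⟩)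
  have : (1:ℝ)/2 ≤ midpt H r := mid_ge_half hH (Finset.mem_of_mem_filter _ hr)
  rw [abs_sub_comm, abs_of_nonpos (by linarith)] at hle
  linarith

end GapBasics
section MeasureCover
open MeasureTheory

lemma cover_bound {k : ℝ} (hk0 : 0 ≤ k) (A B : Finset ℤ)
    (lo₁ hi₁ lo₂ hi₂ : ℤ → ℝ)
    (h₁ : ∀ a ∈ A, lo₁ a ≤ hi₁ a) (h₂ : ∀ b ∈ B, lo₂ b ≤ hi₂ b)
    (hcov : Set.Icc 0 k ⊆ (⋃ a ∈ A, Set.Icc (lo₁ a) (hi₁ a)) ∪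
      (⋃ b ∈ B, Set.Icc (lo₂ b) (hi₂ b))) :
    k ≤ ∑ a ∈ A, (hi₁ a - lo₁ a) + ∑ b ∈ B, (hi₂ b - lo₂ b) := by
  have hm : ENNReal.ofReal k ≤
      ENNReal.ofReal (∑ a ∈ A, (hi₁ a - lo₁ a) + ∑ b ∈ B, (hi₂ b - lo₂ b)) := by
    calc ENNReal.ofReal k = volume (Set.Icc (0:ℝ) k) := by rw [Real.volume_Icc, sub_zero]
    _ ≤ volume ((⋃ a ∈ A, Set.Icc (lo₁ a) (hi₁ a)) ∪
        (⋃ b ∈ B, Set.Icc (lo₂ b) (hi₂ b))) := measure_mono hcov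
    _ ≤ volume (⋃ a ∈ A, Set.Icc (lo₁ a) (hi₁ a)) +
        volume (⋃ b ∈ B, Set.Icc (lo₂ b) (hi₂ b)) := measure_union_le _ _
    _ ≤ (∑ a ∈ A, volume (Set.Icc (lo₁ a) (hi₁ a))) +
        (∑ b ∈ B, volume (Set.Icc (lo₂ b) (hi₂ b))) := by
          gcongr
          · exact measure_biUnion_finset_le A _
          · exact measure_biUnion_finset_le B _
    _ = (∑ a ∈ A, ENNReal.ofReal (hi₁ a - lo₁ a)) +
        (∑ b ∈ B, ENNReal.ofReal (hi₂ b - lo₂ b)) := by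
          simp only [Real.volume_Icc]
    _ = ENNReal.ofReal (∑ a ∈ A, (hi₁ a - lo₁ a) + ∑ b ∈ B, (hi₂ b - lo₂ b)) := by
          rw [ENNReal.ofReal_add (Finset.sum_nonneg (fun a ha => by linarith [h₁ a ha]))
            (Finset.sum_nonneg (fun b hb => by linarith [h₂ b hb]))]
          rw [ENNReal.ofReal_sum_of_nonneg (fun a ha => by linarith [h₁ a ha]),
            ENNReal.ofReal_sum_of_nonneg (fun b hb => by linarith [h₂ b hb])]
  rwa [ENNReal.ofReal_le_ofReal_iff (by
    have := Finset.sum_nonneg (fun a ha => by linarith [h₁ a ha] : ∀ a ∈ A, (0:ℝ) ≤ hi₁ a - lo₁ a)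
    have := Finset.sum_nonneg (fun b hb => by linarith [h₂ b hb] : ∀ b ∈ B, (0:ℝ) ≤ hi₂ b - lo₂ b)
    linarith)] at hm

end MeasureCover

section Part1
variable {k m : ℕ} {G : Fin m → PGraph}

lemma residUnion_subset_pathk (hcov : Finset.univ.biUnion G = pathk k) :
    residUnion G ⊆ pathk k := by
  intro x hx
  obtain ⟨a, ha⟩ := mem_residUnion_iff.1 hx
  rw [← hcov]
  exact Finset.mem_biUnion.2 ⟨a, Finset.mem_univ _, ominus_subset ha⟩

lemma residUnion_nonempty (hcov : Finset.univ.biUnion G = pathk k) (hk : 1 ≤ k) :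
    (residUnion G).Nonempty := by
  have h1 : (1:ℤ) ∈ pathk k := by
    simp only [pathk, Finset.mem_Icc]
    exact ⟨le_refl _, by exact_mod_cast hk⟩
  rw [← hcov] at h1
  obtain ⟨a, _, ha⟩ := Finset.mem_biUnion.1 h1
  have hs : (Finset.univ.filter fun b => (G b).Nonempty).Nonempty :=
    ⟨a, by simp only [Finset.mem_filter]; exact ⟨Finset.mem_univ _, ⟨1, ha⟩⟩⟩
  obtain ⟨a₀, ha₀, hmin⟩ := Finset.exists_min_image _ id hs
  simp only [Finset.mem_filter] at ha₀
  obtain ⟨x, hx⟩ := ha₀.2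
  have hub : unionBelow G a₀ = ∅ := by
    rw [Finset.eq_empty_iff_forall_notMem]
    intro z hz
    simp only [unionBelow, Finset.mem_biUnion, Finset.mem_filter] at hz
    obtain ⟨b, ⟨_, hb⟩, hzb⟩ := hz
    have : ¬ (G b).Nonempty := by
      intro hc
      have := hmin b (by simp only [Finset.mem_filter]; exact ⟨Finset.mem_univ _, hc⟩)
      simp only [id] at this
      exact absurd hb (not_lt.2 this)
    exact this ⟨z, hzb⟩
  refine ⟨x, mem_residUnion_iff.2 ⟨a₀, ?_⟩⟩
  rw [hub, ominus_empty]
  exact hx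

lemma part_one (hk : 1 ≤ k) (hcov : Finset.univ.biUnion G = pathk k) :
    (k : ℝ) ≤ 2 * gapOf k (residUnion G) * Delta (residUnion G) := by
  set H := residUnion G with hHdef
  set g := gapOf k H with hgdef
  have hH : H ⊆ pathk k := residUnion_subset_pathk hcov
  have hne : H.Nonempty := residUnion_nonempty hcov hk
  have hk0 : (0:ℝ) ≤ (k:ℝ) := by positivity
  have hg : (0:ℝ) ≤ g := le_trans (by norm_num) (gap_half hH hne hk)
  have hcov' : Set.Icc (0:ℝ) (k:ℝ) ⊆
      (⋃ r ∈ repset H, Set.Icc (midpt H r - g) (midpt H r + g)) ∪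
      (⋃ b ∈ (∅ : Finset ℤ), Set.Icc (0:ℝ) 0) := by
    intro y hy
    obtain ⟨r, hr, hle⟩ := exists_rep_near hne hk0 hy
    rw [abs_le] at hle
    apply Set.mem_union_left
    apply Set.mem_biUnion hr
    rw [Set.mem_Icc]
    constructor <;> linarith [hle.1, hle.2]
  have := cover_bound hk0 (repset H) ∅ (fun r => midpt H r - g) (fun r => midpt H r + g)
    (fun _ => 0) (fun _ => 0) (fun a _ => by show midpt H a - g ≤ midpt H a + g; linarith) (fun b hb => by simp at hb) hcov'
  simp only [Finset.sum_empty, add_zero] at this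
  calc (k:ℝ) ≤ ∑ r ∈ repset H, (midpt H r + g - (midpt H r - g)) := this
  _ = ∑ r ∈ repset H, 2 * g := by
      apply Finset.sum_congr rfl
      intros; ring
  _ = 2 * g * Delta H := by
      rw [Finset.sum_const, Delta_eq, nsmul_eq_mul]
      ring

end Part1
section CoverHelpers
variable {k m : ℕ} {G : Fin m → PGraph} {H : PGraph} {r r' : ℤ}

/-- total version of the right endpoint, as a real -/
def Tv (H : PGraph) (r : ℤ) : ℝ := ((WithBot.unbotD r (comp H r).max : ℤ) : ℝ)

lemma Tv_eq (hrH : r ∈ H) : Tv H r = ((rend H r hrH : ℤ) : ℝ) := by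
  unfold Tv rend
  rw [← Finset.coe_max' (comp_nonempty hrH), WithBot.unbotD_coe]

lemma repH (hr : r ∈ repset H) : r ∈ H := Finset.mem_of_mem_filter _ hr

lemma mid_rep (hr : r ∈ repset H) : midpt H r = (((r:ℝ) - 1) + Tv H r) / 2 := by
  have hrH := repH hr
  rw [midpt_eq hrH, Tv_eq hrH, repset_lend hr]

lemma Tv_ge (hrH : r ∈ H) : (r:ℝ) ≤ Tv H r := by
  rw [Tv_eq hrH]
  exact_mod_cast le_rend hrH

lemma Tv_le_k (hH : H ⊆ pathk k) (hrH : r ∈ H) : Tv H r ≤ (k:ℝ) := by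
  rw [Tv_eq hrH]
  exact_mod_cast rend_le hH hrH

lemma rep_ge_1 (hH : H ⊆ pathk k) (hrH : r ∈ H) : (1:ℝ) ≤ (r:ℝ) := by
  have := hH hrH
  simp only [pathk, Finset.mem_Icc] at this
  exact_mod_cast this.1

lemma sep_lt (hr : r ∈ repset H) (hr' : r' ∈ repset H) (h : r < r') :
    Tv H r + 2 ≤ (r':ℝ) := by
  have := repset_sep hr hr' h
  rw [Tv_eq (repH hr)]
  push_cast
  exact_mod_cast (by exact_mod_cast this : ((rend H r (repH hr) + 2 : ℤ):ℝ) ≤ (r':ℝ))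

lemma mid_sep (hr : r ∈ repset H) (hr' : r' ∈ repset H) (hne : r' ≠ r) :
    midpt H r' ≤ (r:ℝ) - 1 - 3/2 ∨ Tv H r + 3/2 ≤ midpt H r' := by
  rcases lt_or_gt_of_ne hne with h | h
  · left
    rw [mid_rep hr']
    have h1 : Tv H r' + 2 ≤ (r:ℝ) := sep_lt hr' hr h
    have h2 : (r':ℝ) ≤ Tv H r' := Tv_ge (repH hr')
    linarith
  · right
    rw [mid_rep hr']
    have h1 : Tv H r + 2 ≤ (r':ℝ) := sep_lt hr hr' h
    have h2 : (r':ℝ) ≤ Tv H r' := Tv_ge (repH hr')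
    linarith

lemma mid_self_bounds (hr : r ∈ repset H) :
    (r:ℝ) - 1 + 1/2 ≤ midpt H r ∧ midpt H r ≤ Tv H r - 1/2 := by
  rw [mid_rep hr]
  have h2 : (r:ℝ) ≤ Tv H r := Tv_ge (repH hr)
  constructor <;> linarith

lemma lost_unpack {j : Fin m} (hr : r ∈ repset (residUnion G))
    (hns : r ∉ survSet G j) :
    ∃ f : ℤ, f ∈ G j ∧ (r:ℝ) - 1 ≤ (f:ℝ) ∧ (f:ℝ) ≤ Tv (residUnion G) r + 1 := by
  have : ¬ ∀ l ∈ comp (residUnion G) r, ∀ f ∈ G j, 1 < (l - f).natAbs := by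
    intro hc
    exact hns (Finset.mem_filter.2 ⟨hr, hc⟩)
  push_neg at this
  obtain ⟨l, hl, f, hf, hnat⟩ := this
  have hrH := repH hr
  have h1 : r ≤ l := by
    have := Finset.min'_le _ _ hl
    rwa [← lend, repset_lend hr] at this
    exact hrH
  have h2 : l ≤ rend (residUnion G) r hrH := Finset.le_max' _ _ hl
  have h3 : (l - f).natAbs ≤ 1 := hnat
  have h4 : l - 1 ≤ f ∧ f ≤ l + 1 := by omega
  refine ⟨f, hf, ?_, ?_⟩
  · have : r - 1 ≤ f := by omega
    exact_mod_cast this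
  · rw [Tv_eq hrH]
    have : f ≤ rend (residUnion G) r hrH + 1 := by omega
    exact_mod_cast this

end CoverHelpers
section CoverTwo
variable {k m : ℕ} {G : Fin m → PGraph}

lemma cover_two (hk : 1 ≤ k) (hcov : Finset.univ.biUnion G = pathk k) (j : Fin m)
    {y : ℝ} (hy : y ∈ Set.Icc (0:ℝ) (k:ℝ)) :
    (∃ r ∈ survSet G j, |midpt (residUnion G) r - y| ≤ 2 * gapOf k (residUnion G)) ∨
    (∃ f ∈ G j, (f:ℝ) - 1 - 2 * gapOf k (residUnion G) ≤ y ∧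
      y ≤ (f:ℝ) + 2 * gapOf k (residUnion G)) := by
  set H := residUnion G with hHdef
  set g := gapOf k H with hgdef
  have hH : H ⊆ pathk k := residUnion_subset_pathk hcov
  have hne : H.Nonempty := residUnion_nonempty hcov hk
  have hk0 : (0:ℝ) ≤ (k:ℝ) := by positivity
  have hg0 : (0:ℝ) ≤ g := le_trans (by norm_num) (gap_half hH hne hk)
  by_contra hcon
  push_neg at hcon
  obtain ⟨V1, V2⟩ := hcon
  have V2' : ∀ f : ℤ, f ∈ G j → y < (f:ℝ) - 1 - 2*g ∨ (f:ℝ) + 2*g < y := by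
    intro f hf
    rcases lt_or_ge y ((f:ℝ) - 1 - 2*g) with h | h
    · exact Or.inl h
    · exact Or.inr (V2 f hf h)
  -- the component near y
  obtain ⟨c, hcrep, hcnear⟩ := exists_rep_near hne hk0 hy
  have hcH : c ∈ H := repH hcrep
  have hclost : c ∉ survSet G j := by
    intro hcs
    have := V1 c hcs
    linarith [hcnear, (by linarith : g ≤ 2*g)]
  -- basic quantities
  set Sc : ℝ := (c:ℝ) - 1 with hScdef
  set Tc : ℝ := Tv H c with hTcdef
  have hmc : midpt H c = (Sc + Tc)/2 := mid_rep hcrep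
  have hS0 : (0:ℝ) ≤ Sc := by
    have := rep_ge_1 hH hcH; rw [hScdef]; linarith
  have hTk : Tc ≤ (k:ℝ) := Tv_le_k hH hcH
  have hlen : Sc + 1 ≤ Tc := by
    have := Tv_ge hcH; rw [hScdef]; linarith
  have hcabs := abs_le.1 hcnear
  -- quarter bound : Tc - Sc ≤ 4g  (independent of side)
  have hl4 : Tc - Sc ≤ 4*g := by
    have hu₂ : Sc + (Tc - Sc)/4 ∈ Set.Icc (0:ℝ) (k:ℝ) := by
      rw [Set.mem_Icc]; constructor <;> nlinarith
    obtain ⟨r₂, hr₂, hr₂near⟩ := exists_rep_near hne hk0 hu₂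
    have h₂abs := abs_le.1 hr₂near
    rcases eq_or_ne r₂ c with rfl | hr₂c
    · rw [hmc] at h₂abs; linarith [h₂abs.1, h₂abs.2]
    · rcases mid_sep hcrep hr₂ hr₂c with h | h
      · linarith [h₂abs.2]
      · linarith [h₂abs.1]
  -- determine the side
  obtain ⟨f₀, hf₀, hf₀S, hf₀T⟩ := lost_unpack hcrep hclost
  rcases V2' f₀ hf₀ with hside | hside
  · -- RIGHT case : Tc > y + 2g
    have hTy : y + 2*g < Tc := by linarith
    have hl2 : 2*g < Tc - Sc := by linarith [hcabs.2]
    have hScy : Sc < y := by linarith [hcabs.2]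
    -- minimizer q of |mid - Sc|
    obtain ⟨q, hq, hqmin⟩ := Finset.exists_min_image (repset H)
      (fun r => |midpt H r - Sc|) ⟨c, hcrep⟩
    obtain ⟨r₃, hr₃, hr₃near⟩ := exists_rep_near hne hk0
      (Set.mem_Icc.2 ⟨hS0, by linarith⟩)
    have hqg : |midpt H q - Sc| ≤ g := le_trans (hqmin r₃ hr₃) hr₃near
    have hqabs := abs_le.1 hqg
    have hqc : q ≠ c := by
      intro rfl'
      rw [rfl', hmc] at hqabs
      linarith [hqabs.2]
    have hqleft : midpt H q ≤ Sc - 3/2 := by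
      rcases mid_sep hcrep hq hqc with h | h
      · exact h
      · exfalso; linarith [hqabs.2]
    -- no midpoint strictly between mid q and mid c ⇒ mid c - mid q ≤ 2g
    have hR4 : midpt H c - midpt H q ≤ 2*g := by
      have hu₄ : (midpt H q + midpt H c)/2 ∈ Set.Icc (0:ℝ) (k:ℝ) := by
        have h1 := mid_ge_half hH (repH hq)
        have h2 := mid_le hH hcH
        rw [Set.mem_Icc]
        constructor
        · have h3 := mid_ge_half hH hcH; linarith
        · have h4 := mid_le hH (repH hq); linarith
      obtain ⟨r₄, hr₄, hr₄near⟩ := exists_rep_near hne hk0 hu₄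
      have h₄abs := abs_le.1 hr₄near
      have hm4 : midpt H r₄ ≤ midpt H q ∨ midpt H c ≤ midpt H r₄ := by
        rcases eq_or_ne r₄ q with rfl | h4q
        · exact Or.inl (le_refl _)
        rcases eq_or_ne r₄ c with rfl | h4c
        · exact Or.inr (le_refl _)
        rcases mid_sep hcrep hr₄ h4c with h | h
        · left
          have hmin4 := hqmin r₄ hr₄
          rw [abs_of_nonpos (by linarith), abs_of_nonpos (by linarith)] at hmin4
          linarith
        · right; rw [hmc]; linarith
      rcases hm4 with h | h
      · linarith [h₄abs.1]
      · linarith [h₄abs.2]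
    by_cases hqs : q ∈ survSet G j
    · -- q surviving : contradiction with length bound
      have hV1q := V1 q hqs
      rw [abs_of_nonpos (by linarith)] at hV1q
      -- y - mid q > 2g, mid q ≥ mid c - 2g ⇒ y > mid c ; Tc > y + 2g ⇒ ℓ > 4g
      rw [hmc] at hR4
      linarith
    · -- q lost : contradiction via its hull witness
      obtain ⟨f', hf', hf'S, hf'T⟩ := lost_unpack hq hqs
      -- q < c
      have hqltc : q < c := by
        rcases lt_or_gt_of_ne hqc with h | h
        · exact h
        · exfalso
          have := sep_lt hcrep hq h
          have h2 := (mid_self_bounds hq).1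
          linarith
      have hTqS : Tv H q + 2 ≤ (c:ℝ) := sep_lt hq hcrep hqltc
      have hmq : midpt H q = (((q:ℝ) - 1) + Tv H q)/2 := mid_rep hq
      rcases V2' f' hf' with h | h
      · -- y < f' - 1 - 2g, but f' - 1 ≤ Tv H q ≤ Sc - 1 < y
        linarith
      · -- f' + 2g < y with f' ≥ q - 1 = Sq ; Sq ≥ Tc - 4g + 1 > y - 2g
        rw [hmc] at hR4
        linarith
  · -- LEFT case : Sc < y - 2g
    have hSy : Sc < y - 2*g := by linarith
    have hl2 : 2*g < Tc - Sc := by linarith [hcabs.1]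
    have hTcy : y < Tc := by linarith [hcabs.1]
    obtain ⟨q, hq, hqmin⟩ := Finset.exists_min_image (repset H)
      (fun r => |midpt H r - Tc|) ⟨c, hcrep⟩
    obtain ⟨r₃, hr₃, hr₃near⟩ := exists_rep_near hne hk0
      (Set.mem_Icc.2 ⟨by linarith, hTk⟩)
    have hqg : |midpt H q - Tc| ≤ g := le_trans (hqmin r₃ hr₃) hr₃near
    have hqabs := abs_le.1 hqg
    have hqc : q ≠ c := by
      intro rfl'
      rw [rfl', hmc] at hqabs
      linarith [hqabs.1]
    have hqright : Tc + 3/2 ≤ midpt H q := by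
      rcases mid_sep hcrep hq hqc with h | h
      · exfalso; linarith [hqabs.1]
      · exact h
    have hL4 : midpt H q - midpt H c ≤ 2*g := by
      have hu₄ : (midpt H c + midpt H q)/2 ∈ Set.Icc (0:ℝ) (k:ℝ) := by
        have h1 := mid_ge_half hH hcH
        have h2 := mid_le hH (repH hq)
        rw [Set.mem_Icc]
        constructor
        · have h3 := mid_ge_half hH (repH hq); linarith
        · have h4 := mid_le hH hcH; linarith
      obtain ⟨r₄, hr₄, hr₄near⟩ := exists_rep_near hne hk0 hu₄
      have h₄abs := abs_le.1 hr₄near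
      have hm4 : midpt H r₄ ≤ midpt H c ∨ midpt H q ≤ midpt H r₄ := by
        rcases eq_or_ne r₄ q with rfl | h4q
        · exact Or.inr (le_refl _)
        rcases eq_or_ne r₄ c with rfl | h4c
        · exact Or.inl (le_refl _)
        rcases mid_sep hcrep hr₄ h4c with h | h
        · left; rw [hmc]; linarith
        · right
          have hmin4 := hqmin r₄ hr₄
          rw [abs_of_nonneg (by linarith), abs_of_nonneg (by linarith)] at hmin4
          linarith
      rcases hm4 with h | h
      · linarith [h₄abs.2]
      · linarith [h₄abs.1]
    by_cases hqs : q ∈ survSet G j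
    · have hV1q := V1 q hqs
      rw [abs_of_nonneg (by linarith)] at hV1q
      rw [hmc] at hL4
      linarith
    · obtain ⟨f', hf', hf'S, hf'T⟩ := lost_unpack hq hqs
      have hcltq : c < q := by
        rcases lt_or_gt_of_ne hqc with h | h
        · exfalso
          have := sep_lt hq hcrep h
          have h2 := (mid_self_bounds hq).2
          have h3 := Tv_ge hcH
          linarith
        · exact h
      have hScq : Tc + 2 ≤ (q:ℝ) := sep_lt hcrep hq hcltq
      have hmq : midpt H q = (((q:ℝ) - 1) + Tv H q)/2 := mid_rep hq
      rcases V2' f' hf' with h | h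
      · -- y < f' - 1 - 2g with f' ≤ Tv q ; Tv q ≤ Sc + 4g - 1 < y + 2g - 1
        rw [hmc] at hL4
        linarith
      · -- f' + 2g < y, but f' ≥ q - 1 ≥ Tc + 1 > y
        linarith
end CoverTwo
section PartTwo
variable {k m : ℕ} {G : Fin m → PGraph}

lemma comp_card_le_lam {X : PGraph} {d : ℤ} (hd : d ∈ X) :
    (comp X d).card ≤ lam X := Finset.le_sup (f := fun i => (comp X i).card) hd

lemma part_two (hk : 1 ≤ k) (hcov : Finset.univ.biUnion G = pathk k) (j : Fin m) :
    (k : ℝ) ≤ 4 * gapOf k (residUnion G) * ((survSet G j).card + Delta (G j)) +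
      (lam (G j)) * Delta (G j) := by
  set H := residUnion G with hHdef
  set g := gapOf k H with hgdef
  have hH : H ⊆ pathk k := residUnion_subset_pathk hcov
  have hne : H.Nonempty := residUnion_nonempty hcov hk
  have hk0 : (0:ℝ) ≤ (k:ℝ) := by positivity
  have hg0 : (0:ℝ) ≤ g := le_trans (by norm_num) (gap_half hH hne hk)
  have hcov' : Set.Icc (0:ℝ) (k:ℝ) ⊆
      (⋃ r ∈ survSet G j, Set.Icc (midpt H r - 2*g) (midpt H r + 2*g)) ∪
      (⋃ d ∈ repset (G j), Set.Icc ((d:ℝ) - 1 - 2*g) (Tv (G j) d + 2*g)) := by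
    intro y hy
    rcases cover_two hk hcov j hy with ⟨r, hr, hrle⟩ | ⟨f, hf, hf1, hf2⟩
    · apply Set.mem_union_left
      apply Set.mem_biUnion hr
      rw [Set.mem_Icc]
      have := abs_le.1 hrle
      constructor <;> linarith [this.1, this.2]
    · apply Set.mem_union_right
      have hd : lend (G j) f hf ∈ repset (G j) := lend_mem_repset hf
      apply Set.mem_biUnion hd
      have hdle : lend (G j) f hf ≤ f := lend_le hf
      have hfle : (f:ℝ) ≤ Tv (G j) (lend (G j) f hf) := by
        rw [Tv_eq (comp_subset (lend_mem hf))]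
        have h1 : f ≤ rend (G j) f hf := le_rend hf
        have h2 : rend (G j) f hf = rend (G j) (lend (G j) f hf) (comp_subset (lend_mem hf)) :=
          rend_congr hf _ (comp_lend hf).symm
        rw [← h2]
        exact_mod_cast h1
      rw [Set.mem_Icc]
      have hdle' : ((lend (G j) f hf : ℤ):ℝ) ≤ (f:ℝ) := by exact_mod_cast hdle
      constructor <;> linarith
  have hbound := cover_bound hk0 (survSet G j) (repset (G j))
    (fun r => midpt H r - 2*g) (fun r => midpt H r + 2*g)
    (fun d => (d:ℝ) - 1 - 2*g) (fun d => Tv (G j) d + 2*g)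
    (fun a _ => by show midpt H a - 2*g ≤ midpt H a + 2*g; linarith)
    (fun d hd => by
      show (d:ℝ) - 1 - 2*g ≤ Tv (G j) d + 2*g
      have := Tv_ge (repH hd)
      linarith) hcov'
  have h1 : ∑ r ∈ survSet G j, (midpt H r + 2*g - (midpt H r - 2*g)) =
      (survSet G j).card * (4*g) := by
    rw [Finset.sum_congr rfl (fun r _ => by ring_nf : ∀ r ∈ survSet G j,
      (midpt H r + 2*g - (midpt H r - 2*g)) = 4*g)]
    rw [Finset.sum_const, nsmul_eq_mul]
  have h2 : ∑ d ∈ repset (G j), (Tv (G j) d + 2*g - ((d:ℝ) - 1 - 2*g)) ≤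
      (Delta (G j)) * ((lam (G j)) + 4*g) := by
    rw [Delta_eq, ← nsmul_eq_mul, ← Finset.sum_const]
    apply Finset.sum_le_sum
    intro d hd
    have hdG : d ∈ G j := repH hd
    have hTd : Tv (G j) d = ((rend (G j) d hdG : ℤ):ℝ) := Tv_eq hdG
    have hcard : (comp (G j) d).card = (rend (G j) d hdG - d + 1).toNat := by
      rw [comp_eq_Icc hdG, repset_lend hd, Int.card_Icc]
      congr 1
      ring
    have hrd : d ≤ rend (G j) d hdG := le_rend hdG
    have hlam : (comp (G j) d).card ≤ lam (G j) := comp_card_le_lam hdG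
    have hcr : ((rend (G j) d hdG : ℤ):ℝ) - (d:ℝ) + 1 ≤ (lam (G j) : ℝ) := by
      have h3 : (rend (G j) d hdG - d + 1).toNat ≤ lam (G j) := by rw [← hcard]; exact hlam
      have h4 : rend (G j) d hdG - d + 1 ≤ (lam (G j) : ℤ) := by omega
      have h5 : ((rend (G j) d hdG - d + 1 : ℤ) : ℝ) ≤ ((lam (G j) : ℤ) : ℝ) := by
        exact_mod_cast h4
      push_cast at h5
      linarith
    rw [hTd]
    linarith
  calc (k:ℝ) ≤ _ := hbound
  _ ≤ (survSet G j).card * (4*g) + (Delta (G j)) * ((lam (G j)) + 4*g) := by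
      rw [h1]; linarith
  _ = 4 * g * ((survSet G j).card + Delta (G j)) + (lam (G j)) * Delta (G j) := by ring

end PartTwo

theorem gap_lemma' (k m : ℕ) (hk : 1 ≤ k) (G : Fin m → PGraph)
    (hcov : Finset.univ.biUnion G = pathk k) :
    0 < gapSeq k G ∧
    ((k : ℝ) / (2 * gapSeq k G) ≤ (dvec (seqList G) : ℝ)) ∧
    (∀ j : Fin m,
      ((k : ℝ) - (lam (G j) : ℝ) * (Delta (G j) : ℝ)) / (4 * gapSeq k G) ≤
        (dvec (G j :: (((List.finRange m).filter fun a => a ≠ j).map G)) : ℝ)) := by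
  have hH : residUnion G ⊆ pathk k := residUnion_subset_pathk hcov
  have hne : (residUnion G).Nonempty := residUnion_nonempty hcov hk
  have hghalf : (1:ℝ)/2 ≤ gapSeq k G := gap_half hH hne hk
  have hgpos : 0 < gapSeq k G := by linarith
  refine ⟨hgpos, ?_, ?_⟩
  · rw [div_le_iff₀ (by linarith : (0:ℝ) < 2 * gapSeq k G)]
    have h1 := part_one hk hcov
    have h2 : (Delta (residUnion G) : ℝ) ≤ (dvec (seqList G) : ℝ) := by
      exact_mod_cast Delta_residUnion_le
    have hg0 : (0:ℝ) ≤ gapSeq k G := by linarith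
    calc (k:ℝ) ≤ 2 * gapSeq k G * Delta (residUnion G) := h1
    _ ≤ 2 * gapSeq k G * dvec (seqList G) := by nlinarith
    _ = dvec (seqList G) * (2 * gapSeq k G) := by ring
  · intro j
    rw [div_le_iff₀ (by linarith : (0:ℝ) < 4 * gapSeq k G)]
    have h1 := part_two hk hcov j
    have h2 : ((survSet G j).card : ℝ) + Delta (G j) ≤
        (dvec (G j :: (((List.finRange m).filter fun a => a ≠ j).map G)) : ℝ) := by
      exact_mod_cast survSet_card_le j
    have hg0 : (0:ℝ) ≤ gapSeq k G := by linarith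
    have hgs : gapSeq k G = gapOf k (residUnion G) := rfl
    rw [hgs] at hg0 ⊢
    have h3 := mul_le_mul_of_nonneg_left h2 (by linarith : (0:ℝ) ≤ 4 * gapOf k (residUnion G))
    nlinarith

/-- **Lemma 5.9.**  Let `G_1 ∪ ⋯ ∪ G_m = Path_k` and `g := gap(G_1,…,G_m)`.  Then `g > 0`,
(i) `Δ⃗(G_1,…,G_m) ≥ k/(2g)`, and (ii) for every `j`,
`Δ⃗(G_j,G_1,…,G_{j-1},G_{j+1},…,G_m) ≥ (k − λ(G_j)·Δ(G_j))/(4g)`. -/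
theorem gap_lemma (k m : ℕ) (hk : 1 ≤ k) (G : Fin m → PGraph)
    (hcov : Finset.univ.biUnion G = pathk k) :
    0 < gapSeq k G ∧
    ((k : ℝ) / (2 * gapSeq k G) ≤ (dvec (seqList G) : ℝ)) ∧
    (∀ j : Fin m,
      ((k : ℝ) - (lam (G j) : ℝ) * (Delta (G j) : ℝ)) / (4 * gapSeq k G) ≤
        (dvec (G j :: (((List.finRange m).filter fun a => a ≠ j).map G)) : ℝ)) :=
  gap_lemma' k m hk G hcov
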